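/- In the uniformly elliptic inhomogeneous Markov chain setting, suppose σ_n² = Var(S_n) → ∞. Then there exist a nondecreasing sequence (a_n) of reals and a bounded sequence (b_n) of reals such that σ_n² = a_n + b_n for every n. -/

import Mathlib

open MeasureTheory ProbabilityTheory Filter Set Topology

lemma aux_integrable_of_bdd {Ω : Type*} [MeasurableSpace Ω] {μ : Measure Ω} [IsFiniteMeasure μ]
    {g : Ω → ℝ} (h : AEStronglyMeasurable g μ) {C : ℝ} (hb : ∀ ω, |g ω| ≤ C) :
    Integrable g μ :=
  (integrable_const C).mono' h (Eventually.of_forall (by simpa [Real.norm_eq_abs] using hb))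

lemma aux_geo_le {s : ℝ} (h0 : 0 ≤ s) (h1 : s < 1) (n : ℕ) :
    ∑ i ∈ Finset.range n, s ^ i ≤ (1 - s)⁻¹ := by
  have := Summable.sum_le_tsum (Finset.range n) (fun i _ => pow_nonneg h0 i)
    (summable_geometric_of_lt_one h0 h1)
  simpa [tsum_geometric_of_lt_one h0 h1] using this

lemma aux_nonempty {α : Type*} [MeasurableSpace α] (m : Measure α) [IsProbabilityMeasure m] :
    Nonempty α := by
  by_contra h
  haveI : IsEmpty α := not_nonempty_iff.mp h
  have h1 := measure_univ (μ := m)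
  rw [Set.univ_eq_empty_iff.mpr ‹IsEmpty α›] at h1
  simp at h1

lemma aux_double_sum {s : ℝ} (h0 : 0 ≤ s) (h1 : s < 1) (n m : ℕ) :
    ∑ i ∈ Finset.Icc 1 n, ∑ j ∈ Finset.Ioc n m, s ^ (j - i - 1) ≤ (1 - s)⁻¹ ^ 2 := by
  have hs1 : (0:ℝ) < 1 - s := by linarith
  have hinv : (0:ℝ) ≤ (1 - s)⁻¹ := inv_nonneg.mpr hs1.le
  have hrow : ∀ i ∈ Finset.Icc 1 n,
      ∑ j ∈ Finset.Ioc n m, s ^ (j - i - 1) ≤ s ^ (n - i) * (1 - s)⁻¹ := by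
    intro i hi
    simp only [Finset.mem_Icc] at hi
    have hcongr : ∀ j ∈ Finset.Ioc n m, s ^ (j - i - 1) = s ^ (n - i) * s ^ (j - (n+1)) := by
      intro j hj; simp only [Finset.mem_Ioc] at hj
      rw [← pow_add]; congr 1; omega
    rw [Finset.sum_congr rfl hcongr, ← Finset.mul_sum]
    refine mul_le_mul_of_nonneg_left ?_ (pow_nonneg h0 _)
    have hre : ∑ j ∈ Finset.Ioc n m, s ^ (j - (n+1)) = ∑ t ∈ Finset.range (m - n), s ^ t := by
      refine Finset.sum_bij' (fun j _ => j - (n+1)) (fun t _ => n + 1 + t) ?_ ?_ ?_ ?_ ?_ <;>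
        (intro a ha; simp only [Finset.mem_Ioc, Finset.mem_range] at ha ⊢) <;>
        first
          | omega
          | (congr 1; omega)
    rw [hre]; exact aux_geo_le h0 h1 _
  calc ∑ i ∈ Finset.Icc 1 n, ∑ j ∈ Finset.Ioc n m, s ^ (j-i-1)
      ≤ ∑ i ∈ Finset.Icc 1 n, s ^ (n - i) * (1-s)⁻¹ := Finset.sum_le_sum hrow
    _ = (∑ i ∈ Finset.Icc 1 n, s ^ (n - i)) * (1-s)⁻¹ := by rw [Finset.sum_mul]
    _ ≤ (1-s)⁻¹ * (1-s)⁻¹ := by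
        refine mul_le_mul_of_nonneg_right ?_ hinv
        have hre : ∑ i ∈ Finset.Icc 1 n, s ^ (n - i) = ∑ t ∈ Finset.range n, s ^ t := by
          refine Finset.sum_bij' (fun i _ => n - i) (fun t _ => n - t) ?_ ?_ ?_ ?_ ?_ <;>
            (intro a ha; simp only [Finset.mem_Icc, Finset.mem_range] at ha ⊢) <;>
            first
              | omega
              | (congr 1; omega)
        rw [hre]; exact aux_geo_le h0 h1 n
    _ = (1-s)⁻¹ ^ 2 := (sq _).symm

/-- For uniformly elliptic inhomogeneous Markov chains with uniformly bounded
additive functionals, if `σ_n² = Var(S_n) → ∞` then `σ_n² = a_n + b_n` with `(a_n)`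
nondecreasing and `(b_n)` bounded. -/
theorem stmt14
    {Ω : Type*} [MeasurableSpace Ω] (μ : Measure Ω) [IsProbabilityMeasure μ]
    (𝒳 : ℕ → Type*) [∀ i, MeasurableSpace (𝒳 i)]
    (𝔪 : (j : ℕ) → Measure (𝒳 j)) (h𝔪 : ∀ j, IsProbabilityMeasure (𝔪 j))
    -- the transition densities
    (p : (j : ℕ) → 𝒳 j → 𝒳 (j + 1) → ℝ)
    (hpmeas : ∀ j, Measurable (Function.uncurry (p j)))
    (hp0 : ∀ j x y, 0 ≤ p j x y)
    (hpdens : ∀ j x, ∫ y, p j x y ∂𝔪 (j + 1) = 1)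
    -- the chain
    (X : (j : ℕ) → Ω → 𝒳 j)
    (hXmeas : ∀ j, Measurable (X j))
    (hpast : ∀ j : ℕ,
      MeasurableSpace.comap (fun ω (i : Set.Iic j) => X i.1 ω) MeasurableSpace.pi ≤
        (inferInstance : MeasurableSpace Ω))
    -- the Markov property with the prescribed transition densities
    (hMarkov : ∀ j : ℕ, ∀ g : 𝒳 (j + 1) → ℝ, Measurable g → (∃ M, ∀ y, |g y| ≤ M) →
      μ[fun ω => g (X (j + 1) ω)|
          MeasurableSpace.comap (fun ω (i : Set.Iic j) => X i.1 ω) MeasurableSpace.pi]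
        =ᵐ[μ] fun ω => ∫ y, g y * p j (X j ω) y ∂𝔪 (j + 1))
    -- uniform ellipticity
    (ε₀ : ℝ) (hε₀ : 0 < ε₀)
    (hupper : ∀ j x y, p j x y ≤ 1 / ε₀)
    (hellip : ∀ (j : ℕ) (x : 𝒳 j) (z : 𝒳 (j + 2)),
      ε₀ ≤ ∫ y, p j x y * p (j + 1) y z ∂𝔪 (j + 1))
    -- the uniformly bounded additive functional
    (f : (j : ℕ) → 𝒳 j → 𝒳 (j + 1) → ℝ)
    (hfmeas : ∀ j, Measurable (Function.uncurry (f j)))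
    (K : ℝ) (hfK : ∀ j x y, |f j x y| ≤ K)
    (Y : ℕ → Ω → ℝ) (hY : ∀ j ω, Y j ω = f j (X j ω) (X (j + 1) ω))
    (S : ℕ → Ω → ℝ)
    (hS : ∀ n ω, S n ω = ∑ j ∈ Finset.Icc 1 n, (Y j ω - ∫ ω', Y j ω' ∂μ))
    (σ : ℕ → ℝ) (hσnn : ∀ n, 0 ≤ σ n)
    (hσdef : ∀ n, σ n ^ 2 = ∫ ω, (S n ω) ^ 2 ∂μ)
    (hσtop : Tendsto (fun n => σ n ^ 2) atTop atTop) :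
    ∃ a b : ℕ → ℝ, Monotone a ∧ (∃ M : ℝ, ∀ n, |b n| ≤ M) ∧ ∀ n, σ n ^ 2 = a n + b n := by
  classical
  have hne : ∀ j, Nonempty (𝒳 j) := fun j => by haveI := h𝔪 j; exact aux_nonempty (𝔪 j)
  have hΩne : Nonempty Ω := aux_nonempty μ
  have hK0 : 0 ≤ K :=
    (abs_nonneg _).trans (hfK 0 (Classical.arbitrary _) (Classical.arbitrary _))
  -- contraction rate
  set r : ℝ := max (1 - ε₀) 0 with hrdef
  have hr0 : 0 ≤ r := le_max_right _ _
  have hr1 : r < 1 := max_lt (by linarith) (by norm_num)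
  set s : ℝ := max (Real.sqrt r) (1/2) with hsdef
  have hs0 : 0 ≤ s := le_trans (by norm_num) (le_max_right _ _)
  have hs1 : s < 1 := max_lt (by
      rw [show (1:ℝ) = Real.sqrt 1 by simp]
      exact Real.sqrt_lt_sqrt hr0 hr1) (by norm_num)
  have hpow : ∀ t : ℕ, r ^ (t / 2) ≤ 2 * s ^ t := by
    intro t
    have h1 : r ^ (t / 2) = Real.sqrt r ^ (2 * (t / 2)) := by
      rw [pow_mul, Real.sq_sqrt hr0]
    have h2 : Real.sqrt r ^ (2 * (t / 2)) ≤ s ^ (2 * (t / 2)) :=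
      pow_le_pow_left₀ (Real.sqrt_nonneg r) (le_max_left _ _) _
    have h3 : s ^ (2 * (t / 2)) ≤ s ^ (t - 1) :=
      pow_le_pow_of_le_one hs0 hs1.le (by omega)
    have h4 : s ^ (t - 1) ≤ 2 * s ^ t := by
      rcases Nat.eq_zero_or_pos t with ht | ht
      · subst ht; norm_num
      · have : t - 1 + 1 = t := by omega
        calc s ^ (t - 1) = 1 * s ^ (t-1) := (one_mul _).symm
          _ ≤ (2 * s) * s ^ (t - 1) := by
              refine mul_le_mul_of_nonneg_right ?_ (pow_nonneg hs0 _)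
              have : (1:ℝ)/2 ≤ s := le_max_right _ _
              linarith
          _ = 2 * s ^ (t - 1 + 1) := by ring
          _ = 2 * s ^ t := by rw [this]
    linarith
  -- the filtration
  set F : ℕ → MeasurableSpace Ω := fun k =>
    MeasurableSpace.comap (fun ω (i : Set.Iic k) => X i.1 ω) MeasurableSpace.pi with hFdef
  have hFle : ∀ {k l : ℕ}, k ≤ l → F k ≤ F l := by
    intro k l hkl
    have hres : Measurable[MeasurableSpace.pi]
        (fun (g : (i : Set.Iic l) → 𝒳 i.1) (i : Set.Iic k) => g ⟨i.1, i.2.trans hkl⟩) :=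
      measurable_pi_lambda _ (fun i => measurable_pi_apply _)
    have hcomp : (fun ω (i : Set.Iic k) => X i.1 ω) =
        (fun (g : (i : Set.Iic l) → 𝒳 i.1) (i : Set.Iic k) => g ⟨i.1, i.2.trans hkl⟩) ∘
          (fun ω (i : Set.Iic l) => X i.1 ω) := rfl
    simp only [hFdef]
    rw [hcomp, ← MeasurableSpace.comap_comp]
    exact MeasurableSpace.comap_mono (measurable_iff_comap_le.mp hres)
  have hXmF : ∀ (j k : ℕ), j ≤ k → Measurable[F k] (X j) := by
    intro j k hjk
    have h1 : Measurable[F k] (fun ω (i : Set.Iic k) => X i.1 ω) :=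
      Measurable.of_comap_le le_rfl
    exact (measurable_pi_apply (⟨j, hjk⟩ : Set.Iic k)).comp h1
  -- integrability helpers
  have hIμ : ∀ (g : Ω → ℝ) (c : ℝ), AEStronglyMeasurable g μ → (∀ ω, |g ω| ≤ c) →
      Integrable g μ := fun g c hm hb => aux_integrable_of_bdd hm hb
  have hIm : ∀ (j : ℕ) (g : 𝒳 j → ℝ) (c : ℝ), Measurable g → (∀ x, |g x| ≤ c) →
      Integrable g (𝔪 j) := by
    intro j g c hm hb; haveI := h𝔪 j; exact aux_integrable_of_bdd hm.aestronglyMeasurable hb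
  -- transition density facts
  have hpx : ∀ (k : ℕ) (x : 𝒳 k), Measurable (fun y => p k x y) :=
    fun k x => (hpmeas k).comp measurable_prodMk_left
  have hpb : ∀ (k : ℕ) (x : 𝒳 k) y, |p k x y| ≤ 1/ε₀ := fun k x y => by
    rw [abs_of_nonneg (hp0 k x y)]; exact hupper k x y
  have hpint : ∀ (k : ℕ) (x : 𝒳 k), Integrable (fun y => p k x y) (𝔪 (k+1)) :=
    fun k x => hIm (k+1) _ (1/ε₀) (hpx k x) (hpb k x)
  -- the "integrate one step" machinery
  have hWint : ∀ (k : ℕ) (x : 𝒳 k) (H : 𝒳 k × 𝒳 (k+1) → ℝ) (B : ℝ), Measurable H →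
      (∀ q, |H q| ≤ B) → Integrable (fun y => H (x, y) * p k x y) (𝔪 (k+1)) := by
    intro k x H B hH hB
    have hB0 : 0 ≤ B := (abs_nonneg _).trans (hB (x, Classical.arbitrary _))
    refine hIm (k+1) _ (B * (1/ε₀)) ((hH.comp measurable_prodMk_left).mul (hpx k x))
      (fun y => ?_)
    rw [abs_mul]
    exact mul_le_mul (hB _) (hpb k x y) (abs_nonneg _) hB0
  have hWmeas : ∀ (k : ℕ) (H : 𝒳 k × 𝒳 (k+1) → ℝ), Measurable H →
      Measurable (fun x => ∫ y, H (x, y) * p k x y ∂𝔪 (k+1)) := by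
    intro k H hH
    haveI := h𝔪 (k+1)
    exact (StronglyMeasurable.integral_prod_right'
      (f := fun q : 𝒳 k × 𝒳 (k+1) => H q * p k q.1 q.2)
      ((hH.mul (hpmeas k)).stronglyMeasurable)).measurable
  have hWbd : ∀ (k : ℕ) (H : 𝒳 k × 𝒳 (k+1) → ℝ) (B : ℝ), Measurable H → (∀ q, |H q| ≤ B) →
      ∀ x, |∫ y, H (x, y) * p k x y ∂𝔪 (k+1)| ≤ B := by
    intro k H B hH hB x
    haveI := h𝔪 (k+1)
    calc |∫ y, H (x, y) * p k x y ∂𝔪 (k+1)| ≤ ∫ y, |H (x, y) * p k x y| ∂𝔪 (k+1) := by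
          simpa only [Real.norm_eq_abs] using
            norm_integral_le_integral_norm (μ := 𝔪 (k+1)) (fun y => H (x, y) * p k x y)
      _ ≤ ∫ y, B * p k x y ∂𝔪 (k+1) := by
          refine integral_mono (hWint k x H B hH hB).abs ((hpint k x).const_mul B)
            (fun y => ?_)
          rw [abs_mul, abs_of_nonneg (hp0 k x y)]
          exact mul_le_mul_of_nonneg_right (hB _) (hp0 k x y)
      _ = B := by rw [integral_const_mul, hpdens k x, mul_one]
  -- deviation estimate for one step
  have hPdev : ∀ (k : ℕ) (v : 𝒳 (k+1) → ℝ) (c R : ℝ), Measurable v →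
      (∀ y, |v y - c| ≤ R) → ∀ x, |(∫ y, v y * p k x y ∂𝔪 (k+1)) - c| ≤ R := by
    intro k v c R hv hR x
    haveI := h𝔪 (k+1)
    have hvb : ∀ y, |v y| ≤ R + |c| := fun y => by
      have := hR y
      calc |v y| = |(v y - c) + c| := by ring_nf
        _ ≤ |v y - c| + |c| := abs_add_le _ _
        _ ≤ R + |c| := by linarith
    have h1 : (∫ y, v y * p k x y ∂𝔪 (k+1)) - c = ∫ y, (v y - c) * p k x y ∂𝔪 (k+1) := by
      have hi1 : Integrable (fun y => v y * p k x y) (𝔪 (k+1)) :=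
        hWint k x (fun q => v q.2) (R + |c|) (hv.comp measurable_snd) (fun q => hvb q.2)
      have hi2 : Integrable (fun y => c * p k x y) (𝔪 (k+1)) := (hpint k x).const_mul c
      rw [show (fun y => (v y - c) * p k x y) = fun y => v y * p k x y - c * p k x y from
        funext fun y => by ring]
      rw [integral_sub hi1 hi2, integral_const_mul, hpdens k x, mul_one]
    rw [h1]
    exact hWbd k (fun q => v q.2 - c) R ((hv.comp measurable_snd).sub measurable_const)
      (fun q => hR q.2) x
  -- one-step Markov identity
  have step1 : ∀ (k : ℕ) (G : Ω → ℝ) (c : ℝ), StronglyMeasurable[F k] G → (∀ ω, |G ω| ≤ c) →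
      ∀ (v : 𝒳 (k+1) → ℝ) (B : ℝ), Measurable v → (∀ y, |v y| ≤ B) →
      ∫ ω, G ω * v (X (k+1) ω) ∂μ =
        ∫ ω, G ω * (∫ y, v y * p k (X k ω) y ∂𝔪 (k+1)) ∂μ := by
    intro k G c hG hGb v B hv hB
    haveI := h𝔪 (k+1)
    have hle : F k ≤ (inferInstance : MeasurableSpace Ω) := hpast k
    have hc0 : 0 ≤ c := (abs_nonneg _).trans (hGb (Classical.arbitrary _))
    have hGm : Measurable G := hG.measurable.mono hle le_rfl
    have hvm : Measurable (fun ω => v (X (k+1) ω)) := hv.comp (hXmeas (k+1))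
    have hvi : Integrable (fun ω => v (X (k+1) ω)) μ :=
      hIμ _ B hvm.aestronglyMeasurable (fun ω => hB _)
    have hGvi : Integrable (G * fun ω => v (X (k+1) ω)) μ := by
      refine hIμ _ (c * B) (hGm.mul hvm).aestronglyMeasurable (fun ω => ?_)
      show |G ω * v (X (k+1) ω)| ≤ c * B
      rw [abs_mul]
      exact mul_le_mul (hGb ω) (hB _) (abs_nonneg _) hc0
    have hmul := condExp_mul_of_stronglyMeasurable_left (μ := μ) (m := F k) hG hGvi hvi
    have hmar : (μ[(fun ω => v (X (k+1) ω))|F k]) =ᵐ[μ]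
        fun ω => ∫ y, v y * p k (X k ω) y ∂𝔪 (k+1) := hMarkov k v hv ⟨B, hB⟩
    calc ∫ ω, G ω * v (X (k+1) ω) ∂μ
        = ∫ ω, (μ[G * fun ω => v (X (k+1) ω)|F k]) ω ∂μ :=
          (integral_condExp hle).symm
      _ = ∫ ω, G ω * (μ[(fun ω => v (X (k+1) ω))|F k]) ω ∂μ := by
          refine integral_congr_ae ?_
          filter_upwards [hmul] with ω hω
          exact hω
      _ = ∫ ω, G ω * (∫ y, v y * p k (X k ω) y ∂𝔪 (k+1)) ∂μ := by
          refine integral_congr_ae ?_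
          filter_upwards [hmar] with ω hω
          rw [hω]
  -- two-variable Markov identity
  have step2 : ∀ (k : ℕ) (G : Ω → ℝ) (c : ℝ), StronglyMeasurable[F k] G → (∀ ω, |G ω| ≤ c) →
      ∀ (H : 𝒳 k × 𝒳 (k+1) → ℝ) (B : ℝ), Measurable H → (∀ q, |H q| ≤ B) →
      ∫ ω, G ω * H (X k ω, X (k+1) ω) ∂μ =
        ∫ ω, G ω * (∫ y, H (X k ω, y) * p k (X k ω) y ∂𝔪 (k+1)) ∂μ := by
    intro k G c hG hGb
    haveI := h𝔪 (k+1)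
    have hle : F k ≤ (inferInstance : MeasurableSpace Ω) := hpast k
    have hGm : Measurable G := hG.measurable.mono hle le_rfl
    have hc0 : 0 ≤ c := (abs_nonneg _).trans (hGb (Classical.arbitrary _))
    have hTm : Measurable (fun ω => (X k ω, X (k+1) ω)) := (hXmeas k).prodMk (hXmeas (k+1))
    let Φ : (𝒳 k × 𝒳 (k+1) → ℝ) → Prop := fun H =>
      ∫ ω, G ω * H (X k ω, X (k+1) ω) ∂μ =
        ∫ ω, G ω * (∫ y, H (X k ω, y) * p k (X k ω) y ∂𝔪 (k+1)) ∂μ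
    have hInt1 : ∀ (H : 𝒳 k × 𝒳 (k+1) → ℝ) (B : ℝ), Measurable H → (∀ q, |H q| ≤ B) →
        Integrable (fun ω => G ω * H (X k ω, X (k+1) ω)) μ := by
      intro H B hH hB
      refine hIμ _ (c * B) ((hGm.mul (hH.comp hTm)).aestronglyMeasurable) (fun ω => ?_)
      rw [abs_mul]
      exact mul_le_mul (hGb ω) (hB _) (abs_nonneg _) hc0
    have hInt2 : ∀ (H : 𝒳 k × 𝒳 (k+1) → ℝ) (B : ℝ), Measurable H → (∀ q, |H q| ≤ B) →
        Integrable (fun ω => G ω * (∫ y, H (X k ω, y) * p k (X k ω) y ∂𝔪 (k+1))) μ := by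
      intro H B hH hB
      refine hIμ _ (c * B)
        ((hGm.mul ((hWmeas k H hH).comp (hXmeas k))).aestronglyMeasurable) (fun ω => ?_)
      rw [abs_mul]
      exact mul_le_mul (hGb ω) (hWbd k H B hH hB _) (abs_nonneg _) hc0
    have hadd : ∀ (H1 H2 : 𝒳 k × 𝒳 (k+1) → ℝ) (B1 B2 : ℝ), Measurable H1 → Measurable H2 →
        (∀ q, |H1 q| ≤ B1) → (∀ q, |H2 q| ≤ B2) → Φ H1 → Φ H2 →
        Φ (fun q => H1 q + H2 q) := by
      intro H1 H2 B1 B2 h1 h2 hb1 hb2 hΦ1 hΦ2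
      show ∫ ω, G ω * (H1 (X k ω, X (k+1) ω) + H2 (X k ω, X (k+1) ω)) ∂μ =
        ∫ ω, G ω * (∫ y, (H1 (X k ω, y) + H2 (X k ω, y)) * p k (X k ω) y ∂𝔪 (k+1)) ∂μ
      have e1 : (fun ω => G ω * (H1 (X k ω, X (k+1) ω) + H2 (X k ω, X (k+1) ω))) =
          fun ω => G ω * H1 (X k ω, X (k+1) ω) + G ω * H2 (X k ω, X (k+1) ω) :=
        funext fun ω => by ring
      have e2 : (fun ω =>
          G ω * (∫ y, (H1 (X k ω, y) + H2 (X k ω, y)) * p k (X k ω) y ∂𝔪 (k+1))) =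
          fun ω => G ω * (∫ y, H1 (X k ω, y) * p k (X k ω) y ∂𝔪 (k+1)) +
            G ω * (∫ y, H2 (X k ω, y) * p k (X k ω) y ∂𝔪 (k+1)) := by
        funext ω
        rw [show (fun y => (H1 (X k ω, y) + H2 (X k ω, y)) * p k (X k ω) y) =
            fun y => H1 (X k ω, y) * p k (X k ω) y + H2 (X k ω, y) * p k (X k ω) y from
          funext fun y => by ring]
        rw [integral_add (hWint k _ H1 B1 h1 hb1) (hWint k _ H2 B2 h2 hb2)]
        ring
      rw [e1, integral_add (hInt1 H1 B1 h1 hb1) (hInt1 H2 B2 h2 hb2), hΦ1, hΦ2, e2,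
        integral_add (hInt2 H1 B1 h1 hb1) (hInt2 H2 B2 h2 hb2)]
    have hsmul : ∀ (H : 𝒳 k × 𝒳 (k+1) → ℝ) (a : ℝ), Measurable H → Φ H →
        Φ (fun q => a * H q) := by
      intro H a hH hΦH
      show ∫ ω, G ω * (a * H (X k ω, X (k+1) ω)) ∂μ =
        ∫ ω, G ω * (∫ y, (a * H (X k ω, y)) * p k (X k ω) y ∂𝔪 (k+1)) ∂μ
      have e1 : (fun ω => G ω * (a * H (X k ω, X (k+1) ω))) =
          fun ω => a * (G ω * H (X k ω, X (k+1) ω)) := funext fun ω => by ring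
      have e2 : (fun ω => G ω * (∫ y, (a * H (X k ω, y)) * p k (X k ω) y ∂𝔪 (k+1))) =
          fun ω => a * (G ω * (∫ y, H (X k ω, y) * p k (X k ω) y ∂𝔪 (k+1))) := by
        funext ω
        rw [show (fun y => (a * H (X k ω, y)) * p k (X k ω) y) =
            fun y => a * (H (X k ω, y) * p k (X k ω) y) from funext fun y => by ring]
        rw [integral_const_mul]
        ring
      rw [e1, integral_const_mul, hΦH, e2, integral_const_mul]
    have hlim : ∀ (Hn : ℕ → 𝒳 k × 𝒳 (k+1) → ℝ) (H : 𝒳 k × 𝒳 (k+1) → ℝ) (B : ℝ),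
        (∀ n, Measurable (Hn n)) → Measurable H → (∀ n q, |Hn n q| ≤ B) →
        (∀ q, Tendsto (fun n => Hn n q) atTop (𝓝 (H q))) → (∀ n, Φ (Hn n)) → Φ H := by
      intro Hn H B hmn hm hbn htend hΦn
      have hL : Tendsto (fun n => ∫ ω, G ω * Hn n (X k ω, X (k+1) ω) ∂μ) atTop
          (𝓝 (∫ ω, G ω * H (X k ω, X (k+1) ω) ∂μ)) := by
        refine tendsto_integral_of_dominated_convergence (fun _ω => c * B)
          (fun n => (hGm.mul ((hmn n).comp hTm)).aestronglyMeasurable)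
          (integrable_const _) (fun n => Eventually.of_forall fun ω => ?_)
          (Eventually.of_forall fun ω => ?_)
        · rw [Real.norm_eq_abs, abs_mul]
          exact mul_le_mul (hGb ω) (hbn n _) (abs_nonneg _) hc0
        · exact (htend _).const_mul (G ω)
      have hRin : ∀ ω : Ω,
          Tendsto (fun n => ∫ y, Hn n (X k ω, y) * p k (X k ω) y ∂𝔪 (k+1)) atTop
          (𝓝 (∫ y, H (X k ω, y) * p k (X k ω) y ∂𝔪 (k+1))) := by
        intro ω
        refine tendsto_integral_of_dominated_convergence (fun y => B * p k (X k ω) y)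
          (fun n => (((hmn n).comp measurable_prodMk_left).mul
            (hpx k (X k ω))).aestronglyMeasurable)
          ((hpint k _).const_mul B) (fun n => Eventually.of_forall fun y => ?_)
          (Eventually.of_forall fun y => ?_)
        · rw [Real.norm_eq_abs, abs_mul, abs_of_nonneg (hp0 k _ y)]
          exact mul_le_mul_of_nonneg_right (hbn n _) (hp0 k _ y)
        · exact (htend _).mul_const _
      have hR : Tendsto
          (fun n => ∫ ω, G ω * (∫ y, Hn n (X k ω, y) * p k (X k ω) y ∂𝔪 (k+1)) ∂μ)
          atTop (𝓝 (∫ ω, G ω * (∫ y, H (X k ω, y) * p k (X k ω) y ∂𝔪 (k+1)) ∂μ)) := by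
        refine tendsto_integral_of_dominated_convergence (fun _ω => c * B)
          (fun n => (hGm.mul ((hWmeas k (Hn n) (hmn n)).comp (hXmeas k))).aestronglyMeasurable)
          (integrable_const _) (fun n => Eventually.of_forall fun ω => ?_)
          (Eventually.of_forall fun ω => ?_)
        · rw [Real.norm_eq_abs, abs_mul]
          exact mul_le_mul (hGb ω) (hWbd k (Hn n) B (hmn n) (hbn n) _) (abs_nonneg _) hc0
        · exact (hRin ω).const_mul (G ω)
      refine tendsto_nhds_unique hL ?_
      have heq : (fun n => ∫ ω, G ω * Hn n (X k ω, X (k+1) ω) ∂μ) =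
          fun n => ∫ ω, G ω * (∫ y, Hn n (X k ω, y) * p k (X k ω) y ∂𝔪 (k+1)) ∂μ :=
        funext fun n => hΦn n
      rw [heq]
      exact hR
    -- indicators of measurable rectangles
    have hbasic : ∀ A ∈ image2 (· ×ˢ ·) {s : Set (𝒳 k) | MeasurableSet s}
        {t : Set (𝒳 (k+1)) | MeasurableSet t}, Φ (A.indicator fun _ => (1:ℝ)) := by
      rintro A ⟨s', hs', t', ht', rfl⟩
      show ∫ ω, G ω * (s' ×ˢ t').indicator (fun _ => (1:ℝ)) (X k ω, X (k+1) ω) ∂μ =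
        ∫ ω, G ω * (∫ y, (s' ×ˢ t').indicator (fun _ => (1:ℝ)) (X k ω, y) *
          p k (X k ω) y ∂𝔪 (k+1)) ∂μ
      have hsm : Measurable (s'.indicator (fun _ => (1:ℝ))) := measurable_const.indicator hs'
      have htm : Measurable (t'.indicator (fun _ => (1:ℝ))) := measurable_const.indicator ht'
      have hsb : ∀ x, |s'.indicator (fun _ => (1:ℝ)) x| ≤ 1 := by
        intro x; by_cases hx : x ∈ s' <;> simp [hx]
      have htb : ∀ y, |t'.indicator (fun _ => (1:ℝ)) y| ≤ 1 := by
        intro y; by_cases hy : y ∈ t' <;> simp [hy]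
      have hG'sm : StronglyMeasurable[F k]
          (fun ω => G ω * s'.indicator (fun _ => (1:ℝ)) (X k ω)) :=
        hG.mul ((hsm.comp (hXmF k k le_rfl)).stronglyMeasurable)
      have hG'b : ∀ ω, |G ω * s'.indicator (fun _ => (1:ℝ)) (X k ω)| ≤ c := by
        intro ω
        rw [abs_mul]
        calc |G ω| * |s'.indicator (fun _ => (1:ℝ)) (X k ω)| ≤ c * 1 :=
              mul_le_mul (hGb ω) (hsb _) (abs_nonneg _) hc0
          _ = c := mul_one c
      have hkey := step1 k (fun ω => G ω * s'.indicator (fun _ => (1:ℝ)) (X k ω)) c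
        hG'sm hG'b (t'.indicator (fun _ => (1:ℝ))) 1 htm htb
      calc ∫ ω, G ω * (s' ×ˢ t').indicator (fun _ => (1:ℝ)) (X k ω, X (k+1) ω) ∂μ
          = ∫ ω, (G ω * s'.indicator (fun _ => (1:ℝ)) (X k ω)) *
              t'.indicator (fun _ => (1:ℝ)) (X (k+1) ω) ∂μ := by
            refine integral_congr_ae (Eventually.of_forall fun ω => ?_)
            show G ω * (s' ×ˢ t').indicator (fun _ => (1:ℝ)) (X k ω, X (k+1) ω) = _
            by_cases hx : X k ω ∈ s' <;> by_cases hy : X (k+1) ω ∈ t' <;>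
              simp [Set.indicator_apply, Set.mem_prod, hx, hy]
        _ = ∫ ω, (G ω * s'.indicator (fun _ => (1:ℝ)) (X k ω)) *
              (∫ y, t'.indicator (fun _ => (1:ℝ)) y * p k (X k ω) y ∂𝔪 (k+1)) ∂μ := hkey
        _ = ∫ ω, G ω * (∫ y, (s' ×ˢ t').indicator (fun _ => (1:ℝ)) (X k ω, y) *
              p k (X k ω) y ∂𝔪 (k+1)) ∂μ := by
            refine integral_congr_ae (Eventually.of_forall fun ω => ?_)
            show (G ω * s'.indicator (fun _ => (1:ℝ)) (X k ω)) *
              (∫ y, t'.indicator (fun _ => (1:ℝ)) y * p k (X k ω) y ∂𝔪 (k+1)) = _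
            by_cases hx : X k ω ∈ s'
            · have : ∀ y : 𝒳 (k+1), (s' ×ˢ t').indicator (fun _ => (1:ℝ)) (X k ω, y) =
                  t'.indicator (fun _ => (1:ℝ)) y := by
                intro y
                by_cases hy : y ∈ t' <;> simp [Set.indicator_apply, Set.mem_prod, hx, hy]
              simp only [this, Set.indicator_of_mem hx]
              ring
            · have : ∀ y : 𝒳 (k+1), (s' ×ˢ t').indicator (fun _ => (1:ℝ)) (X k ω, y) =
                  0 := by
                intro y
                simp [Set.indicator_apply, Set.mem_prod, hx]
              simp [this, Set.indicator_of_notMem hx]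
    have hempty : Φ ((∅ : Set (𝒳 k × 𝒳 (k+1))).indicator fun _ => (1:ℝ)) := by
      show ∫ ω, G ω * (∅ : Set (𝒳 k × 𝒳 (k+1))).indicator
          (fun _ => (1:ℝ)) (X k ω, X (k+1) ω) ∂μ = _
      simp
    have hcompl : ∀ (A : Set (𝒳 k × 𝒳 (k+1))), MeasurableSet A →
        Φ (A.indicator fun _ => (1:ℝ)) → Φ (Aᶜ.indicator fun _ => (1:ℝ)) := by
      intro A hA hΦA
      have hAind : Measurable (A.indicator fun _ => (1:ℝ)) := measurable_const.indicator hA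
      have hAb : ∀ q, |A.indicator (fun _ => (1:ℝ)) q| ≤ 1 := by
        intro q; by_cases hq : q ∈ A <;> simp [hq]
      have hGint : Integrable G μ := hIμ _ c hGm.aestronglyMeasurable hGb
      show ∫ ω, G ω * Aᶜ.indicator (fun _ => (1:ℝ)) (X k ω, X (k+1) ω) ∂μ =
        ∫ ω, G ω * (∫ y, Aᶜ.indicator (fun _ => (1:ℝ)) (X k ω, y) *
          p k (X k ω) y ∂𝔪 (k+1)) ∂μ
      have hcind : ∀ q : 𝒳 k × 𝒳 (k+1), Aᶜ.indicator (fun _ => (1:ℝ)) q =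
          1 - A.indicator (fun _ => (1:ℝ)) q := by
        intro q; by_cases hq : q ∈ A <;> simp [hq]
      have e1 : (fun ω => G ω * Aᶜ.indicator (fun _ => (1:ℝ)) (X k ω, X (k+1) ω)) =
          fun ω => G ω - G ω * A.indicator (fun _ => (1:ℝ)) (X k ω, X (k+1) ω) :=
        funext fun ω => by rw [hcind]; ring
      have e2 : (fun ω => G ω * (∫ y, Aᶜ.indicator (fun _ => (1:ℝ)) (X k ω, y) *
          p k (X k ω) y ∂𝔪 (k+1))) =
          fun ω => G ω - G ω * (∫ y, A.indicator (fun _ => (1:ℝ)) (X k ω, y) *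
            p k (X k ω) y ∂𝔪 (k+1)) := by
        funext ω
        have e3 : (fun y => Aᶜ.indicator (fun _ => (1:ℝ)) (X k ω, y) * p k (X k ω) y) =
            fun y => p k (X k ω) y -
              A.indicator (fun _ => (1:ℝ)) (X k ω, y) * p k (X k ω) y :=
          funext fun y => by rw [hcind]; ring
        rw [e3, integral_sub (hpint k _)
          (hWint k _ (A.indicator fun _ => (1:ℝ)) 1 hAind hAb), hpdens k _]
        ring
      rw [e1, e2, integral_sub hGint (hInt1 _ 1 hAind hAb),
        integral_sub hGint (hInt2 _ 1 hAind hAb), hΦA]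
    have hunion : ∀ (A : ℕ → Set (𝒳 k × 𝒳 (k+1))), Pairwise (Function.onFun Disjoint A) →
        (∀ i, MeasurableSet (A i)) → (∀ i, Φ ((A i).indicator fun _ => (1:ℝ))) →
        Φ ((⋃ i, A i).indicator fun _ => (1:ℝ)) := by
      intro A hdisj hAmeas hΦA
      set U : ℕ → Set (𝒳 k × 𝒳 (k+1)) := fun n => ⋃ i ∈ Finset.range n, A i with hUdef
      have hUmeas : ∀ n, MeasurableSet (U n) :=
        fun n => Finset.measurableSet_biUnion _ (fun i _ => hAmeas i)
      have hUb : ∀ n q, |(U n).indicator (fun _ => (1:ℝ)) q| ≤ 1 := by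
        intro n q; by_cases hq : q ∈ U n <;> simp [hq]
      have hΦU : ∀ n, Φ ((U n).indicator fun _ => (1:ℝ)) := by
        intro n
        induction n with
        | zero =>
          have : U 0 = ∅ := by simp [hUdef]
          rw [this]; exact hempty
        | succ n ihn =>
          have hU1 : U (n+1) = A n ∪ U n := by
            simp only [hUdef, Finset.range_add_one, Finset.set_biUnion_insert]
          have hdisj2 : Disjoint (A n) (U n) := by
            rw [Set.disjoint_left]
            intro q hq hqU
            simp only [hUdef, Set.mem_iUnion] at hqU
            obtain ⟨i, hi, hqi⟩ := hqU
            have hne2 : i ≠ n := by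
              simp only [Finset.mem_range] at hi; omega
            exact Set.disjoint_left.mp (hdisj hne2) hqi hq
          have hindsum : (U (n+1)).indicator (fun _ => (1:ℝ)) =
              fun q => (A n).indicator (fun _ => (1:ℝ)) q +
                (U n).indicator (fun _ => (1:ℝ)) q := by
            rw [hU1, Set.indicator_union_of_disjoint hdisj2]
          rw [hindsum]
          exact hadd _ _ 1 1 (measurable_const.indicator (hAmeas n))
            (measurable_const.indicator (hUmeas n))
            (fun q => by by_cases hq : q ∈ A n <;> simp [hq]) (hUb n) (hΦA n) ihn
      refine hlim (fun n => (U n).indicator fun _ => (1:ℝ))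
        ((⋃ i, A i).indicator fun _ => (1:ℝ)) 1
        (fun n => measurable_const.indicator (hUmeas n))
        (measurable_const.indicator (MeasurableSet.iUnion hAmeas)) hUb ?_ hΦU
      intro q
      by_cases hq : q ∈ ⋃ i, A i
      · obtain ⟨i₀, hi₀⟩ := Set.mem_iUnion.mp hq
        have hev : ∀ n ≥ i₀ + 1, (U n).indicator (fun _ => (1:ℝ)) q =
            (⋃ i, A i).indicator (fun _ => (1:ℝ)) q := by
          intro n hn
          have hqU : q ∈ U n := by
            simp only [hUdef, Set.mem_iUnion]
            exact ⟨i₀, Finset.mem_range.mpr (by omega), hi₀⟩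
          rw [Set.indicator_of_mem hqU, Set.indicator_of_mem hq]
        exact tendsto_atTop_of_eventually_const hev
      · have hev : ∀ n, (U n).indicator (fun _ => (1:ℝ)) q =
            (⋃ i, A i).indicator (fun _ => (1:ℝ)) q := by
          intro n
          have hqU : q ∉ U n := by
            intro hqU
            refine hq ?_
            simp only [hUdef, Set.mem_iUnion] at hqU
            obtain ⟨i, _, hqi⟩ := hqU
            exact Set.mem_iUnion.mpr ⟨i, hqi⟩
          rw [Set.indicator_of_notMem hqU, Set.indicator_of_notMem hq]
        rw [show (fun n => (U n).indicator (fun _ => (1:ℝ)) q) =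
            fun _n => (⋃ i, A i).indicator (fun _ => (1:ℝ)) q from funext hev]
        exact tendsto_const_nhds
    have hind : ∀ (A : Set (𝒳 k × 𝒳 (k+1))), MeasurableSet A →
        Φ (A.indicator fun _ => (1:ℝ)) :=
      fun A hA => MeasurableSpace.induction_on_inter
        (C := fun A _ => Φ (A.indicator fun _ => (1:ℝ)))
        generateFrom_prod.symm isPiSystem_prod hempty hbasic hcompl hunion A hA
    have hsimp : ∀ (φ : SimpleFunc (𝒳 k × 𝒳 (k+1)) ℝ), Φ φ := by
      intro φ
      induction φ using SimpleFunc.induction with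
      | @const c' s hs =>
        have hcoe : ⇑(SimpleFunc.piecewise s hs (SimpleFunc.const _ c')
            (SimpleFunc.const _ (0:ℝ))) =
            fun q => c' * s.indicator (fun _ => (1:ℝ)) q := by
          funext q
          by_cases hq : q ∈ s <;>
            simp [SimpleFunc.piecewise_apply, Set.indicator_apply, hq]
        rw [hcoe]
        exact hsmul _ c' (measurable_const.indicator hs) (hind s hs)
      | @add φ₁ φ₂ hdis hφ hψ =>
        obtain ⟨B1, hB1⟩ := φ₁.exists_forall_norm_le
        obtain ⟨B2, hB2⟩ := φ₂.exists_forall_norm_le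
        have hcoe : ⇑(φ₁ + φ₂) = fun q => φ₁ q + φ₂ q := rfl
        rw [hcoe]
        exact hadd _ _ B1 B2 φ₁.measurable φ₂.measurable
          (fun q => by rw [← Real.norm_eq_abs]; exact hB1 q)
          (fun q => by rw [← Real.norm_eq_abs]; exact hB2 q) hφ hψ
    intro H B hH hB
    exact hlim (fun n => ⇑(SimpleFunc.approxOn H hH univ 0 (Set.mem_univ 0) n)) H (B + B)
      (fun n => (SimpleFunc.approxOn H hH univ 0 (Set.mem_univ 0) n).measurable) hH
      (fun n q => by
        have h1 := SimpleFunc.norm_approxOn_zero_le hH (Set.mem_univ 0) q n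
        rw [Real.norm_eq_abs, Real.norm_eq_abs] at h1
        exact h1.trans (add_le_add (hB q) (hB q)))
      (fun q => SimpleFunc.tendsto_approxOn hH (Set.mem_univ 0) (by simp))
      (fun n => hsimp _)
  -- iterated projection with contraction
  have step3 : ∀ (d k j : ℕ), j = k + d → ∀ (v : 𝒳 j → ℝ) (B R c₀ : ℝ), Measurable v →
      0 ≤ R → (∀ x, |v x| ≤ B) → (∀ x, |v x - c₀| ≤ R) →
      ∃ (v' : 𝒳 k → ℝ) (c' : ℝ), Measurable v' ∧ (∀ x, |v' x| ≤ B) ∧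
        (∀ x, |v' x - c'| ≤ R * r ^ (d / 2)) ∧
        ∀ (G : Ω → ℝ) (c : ℝ), StronglyMeasurable[F k] G → (∀ ω, |G ω| ≤ c) →
          ∫ ω, G ω * v (X j ω) ∂μ = ∫ ω, G ω * v' (X k ω) ∂μ := by
    intro d
    induction d using Nat.strong_induction_on with
    | _ d IH =>
    match d with
    | 0 =>
      intro k j hj v B R c₀ hv hR0 hvB hvR
      subst hj
      exact ⟨v, c₀, hv, hvB, by simpa using hvR, fun G c hG hGb => rfl⟩
    | 1 =>
      intro k j hj v B R c₀ hv hR0 hvB hvR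
      subst hj
      refine ⟨fun x => ∫ y, v y * p k x y ∂𝔪 (k+1), c₀,
        hWmeas k (fun q => v q.2) (hv.comp measurable_snd),
        hWbd k (fun q => v q.2) B (hv.comp measurable_snd) (fun q => hvB q.2),
        fun x => by simpa using hPdev k v c₀ R hv hvR x,
        fun G c hG hGb => step1 k G c hG hGb v B hv hvB⟩
    | (d+2) =>
      intro k j hj v B R c₀ hv hR0 hvB hvR
      haveI := h𝔪 (k+1)
      haveI := h𝔪 (k+2)
      obtain ⟨v'', c'', hv''m, hv''B, hv''R, hv''eq⟩ :=
        IH d (by omega) (k+2) j (by omega) v B R c₀ hv hR0 hvB hvR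
      set R'' : ℝ := R * r ^ (d / 2) with hR''def
      have hR''0 : 0 ≤ R'' := mul_nonneg hR0 (pow_nonneg hr0 _)
      have hB0 : 0 ≤ B := (abs_nonneg _).trans (hv''B (Classical.arbitrary _))
      -- one-step projections
      set w : 𝒳 (k+1) → ℝ := fun y => ∫ z, v'' z * p (k+1) y z ∂𝔪 (k+2) with hwdef
      have hwm : Measurable w :=
        hWmeas (k+1) (fun q => v'' q.2) (hv''m.comp measurable_snd)
      have hwB : ∀ y, |w y| ≤ B :=
        hWbd (k+1) (fun q => v'' q.2) B (hv''m.comp measurable_snd) (fun q => hv''B q.2)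
      set v' : 𝒳 k → ℝ := fun x => ∫ y, w y * p k x y ∂𝔪 (k+1) with hv'def
      have hv'm : Measurable v' := hWmeas k (fun q => w q.2) (hwm.comp measurable_snd)
      have hv'B : ∀ x, |v' x| ≤ B :=
        hWbd k (fun q => w q.2) B (hwm.comp measurable_snd) (fun q => hwB q.2)
      set c' : ℝ := ε₀ * (∫ z, v'' z ∂𝔪 (k+2)) + (1 - ε₀) * c'' with hc'def
      refine ⟨v', c', hv'm, hv'B, ?_, ?_⟩
      · -- deviation bound
        intro x
        set Q : 𝒳 (k+2) → ℝ := fun z => ∫ y, p k x y * p (k+1) y z ∂𝔪 (k+1) with hQdef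
        have hQm : Measurable Q := by
          have hm1 : Measurable (fun q : 𝒳 (k+2) × 𝒳 (k+1) => p k x q.2 * p (k+1) q.2 q.1) :=
            ((hpx k x).comp measurable_snd).mul
              ((hpmeas (k+1)).comp (measurable_snd.prodMk measurable_fst))
          exact (StronglyMeasurable.integral_prod_right'
            (f := fun q : 𝒳 (k+2) × 𝒳 (k+1) => p k x q.2 * p (k+1) q.2 q.1)
            hm1.stronglyMeasurable).measurable
        have hQl : ∀ z, ε₀ ≤ Q z := fun z => hellip k x z
        have hQint : ∀ z, Integrable (fun y => p k x y * p (k+1) y z) (𝔪 (k+1)) := by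
          intro z
          refine hIm (k+1) _ ((1/ε₀) * (1/ε₀))
            ((hpx k x).mul ((hpmeas (k+1)).comp (measurable_id.prodMk measurable_const)))
            (fun y => ?_)
          rw [abs_mul]
          exact mul_le_mul (hpb k x y) (hpb (k+1) y z) (abs_nonneg _)
            (by positivity)
        have hQu : ∀ z, Q z ≤ 1/ε₀ := by
          intro z
          calc Q z ≤ ∫ y, p k x y * (1/ε₀) ∂𝔪 (k+1) := by
                refine integral_mono (hQint z) ((hpint k x).mul_const _) (fun y => ?_)
                exact mul_le_mul_of_nonneg_left (hupper (k+1) y z) (hp0 k x y)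
            _ = 1/ε₀ := by rw [integral_mul_const, hpdens k x, one_mul]
        have hQb : ∀ z, |Q z| ≤ 1/ε₀ := fun z => by
          rw [abs_of_nonneg (le_trans hε₀.le (hQl z))]; exact hQu z
        have hQInt : Integrable Q (𝔪 (k+2)) := hIm (k+2) _ (1/ε₀) hQm hQb
        have hv''Int : Integrable v'' (𝔪 (k+2)) := hIm (k+2) _ B hv''m hv''B
        have hQone : ∫ z, Q z ∂𝔪 (k+2) = 1 := by
          have hFub : Integrable
              (Function.uncurry fun z y => p k x y * p (k+1) y z)
              ((𝔪 (k+2)).prod (𝔪 (k+1))) := by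
            haveI : IsFiniteMeasure ((𝔪 (k+2)).prod (𝔪 (k+1))) := by
              haveI := h𝔪 (k+2); haveI := h𝔪 (k+1); infer_instance
            refine aux_integrable_of_bdd ?_ (C := (1/ε₀) * (1/ε₀)) (fun q => ?_)
            · exact (((hpx k x).comp measurable_snd).mul
                ((hpmeas (k+1)).comp (measurable_snd.prodMk measurable_fst))).aestronglyMeasurable
            · show |p k x q.2 * p (k+1) q.2 q.1| ≤ (1/ε₀) * (1/ε₀)
              rw [abs_mul]
              exact mul_le_mul (hpb k x q.2) (hpb (k+1) q.2 q.1) (abs_nonneg _) (by positivity)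
          calc ∫ z, Q z ∂𝔪 (k+2)
              = ∫ y, ∫ z, p k x y * p (k+1) y z ∂𝔪 (k+2) ∂𝔪 (k+1) :=
                integral_integral_swap hFub
            _ = ∫ y, p k x y * ∫ z, p (k+1) y z ∂𝔪 (k+2) ∂𝔪 (k+1) := by
                refine integral_congr_ae (Eventually.of_forall fun y => ?_)
                show ∫ z, p k x y * p (k+1) y z ∂𝔪 (k+2)
                  = p k x y * ∫ z, p (k+1) y z ∂𝔪 (k+2)
                rw [integral_const_mul]
            _ = 1 := by
                rw [show (fun y => p k x y * ∫ z, p (k+1) y z ∂𝔪 (k+2)) = fun y => p k x y from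
                  funext fun y => by rw [hpdens (k+1) y, mul_one]]
                exact hpdens k x
        have hfub2 : v' x = ∫ z, v'' z * Q z ∂𝔪 (k+2) := by
          have hFub : Integrable
              (Function.uncurry fun y z => v'' z * p (k+1) y z * p k x y)
              ((𝔪 (k+1)).prod (𝔪 (k+2))) := by
            haveI : IsFiniteMeasure ((𝔪 (k+1)).prod (𝔪 (k+2))) := by
              haveI := h𝔪 (k+2); haveI := h𝔪 (k+1); infer_instance
            refine aux_integrable_of_bdd ?_ (C := B * (1/ε₀) * (1/ε₀)) (fun q => ?_)
            · exact (((hv''m.comp measurable_snd).mul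
                ((hpmeas (k+1)).comp (measurable_fst.prodMk measurable_snd))).mul
                ((hpx k x).comp measurable_fst)).aestronglyMeasurable
            · show |v'' q.2 * p (k+1) q.1 q.2 * p k x q.1| ≤ B * (1/ε₀) * (1/ε₀)
              rw [abs_mul, abs_mul]
              refine mul_le_mul (mul_le_mul (hv''B q.2) (hpb (k+1) q.1 q.2) (abs_nonneg _) hB0)
                (hpb k x q.1) (abs_nonneg _) (by positivity)
          calc v' x = ∫ y, (∫ z, v'' z * p (k+1) y z ∂𝔪 (k+2)) * p k x y ∂𝔪 (k+1) := rfl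
            _ = ∫ y, ∫ z, v'' z * p (k+1) y z * p k x y ∂𝔪 (k+2) ∂𝔪 (k+1) := by
                refine integral_congr_ae (Eventually.of_forall fun y => ?_)
                show (∫ z, v'' z * p (k+1) y z ∂𝔪 (k+2)) * p k x y
                  = ∫ z, v'' z * p (k+1) y z * p k x y ∂𝔪 (k+2)
                rw [← integral_mul_const]
            _ = ∫ z, ∫ y, v'' z * p (k+1) y z * p k x y ∂𝔪 (k+1) ∂𝔪 (k+2) :=
                integral_integral_swap hFub
            _ = ∫ z, v'' z * Q z ∂𝔪 (k+2) := by
                refine integral_congr_ae (Eventually.of_forall fun z => ?_)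
                show ∫ y, v'' z * p (k+1) y z * p k x y ∂𝔪 (k+1) = v'' z * Q z
                rw [show (fun y => v'' z * p (k+1) y z * p k x y) =
                    fun y => v'' z * (p k x y * p (k+1) y z) from funext fun y => by ring]
                rw [integral_const_mul]
        have hdev : v' x - c' = ∫ z, (v'' z - c'') * (Q z - ε₀) ∂𝔪 (k+2) := by
          have h1 : Integrable (fun z => v'' z * Q z) (𝔪 (k+2)) := by
            refine hIm (k+2) _ (B * (1/ε₀)) (hv''m.mul hQm) (fun z => ?_)
            rw [abs_mul]
            exact mul_le_mul (hv''B z) (hQb z) (abs_nonneg _) hB0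
          have h2 : Integrable (fun z => c'' * Q z) (𝔪 (k+2)) := hQInt.const_mul _
          have h3 : Integrable (fun z => ε₀ * v'' z) (𝔪 (k+2)) := hv''Int.const_mul _
          have hexpand : (fun z => (v'' z - c'') * (Q z - ε₀)) =
              fun z => v'' z * Q z - c'' * Q z - ε₀ * v'' z + c'' * ε₀ :=
            funext fun z => by ring
          have h12 : Integrable (fun z => v'' z * Q z - c'' * Q z) (𝔪 (k+2)) := h1.sub h2
          have h123 : Integrable (fun z => v'' z * Q z - c'' * Q z - ε₀ * v'' z) (𝔪 (k+2)) :=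
            h12.sub h3
          rw [hexpand, integral_add h123 (integrable_const _),
            integral_sub h12 h3, integral_sub h1 h2,
            integral_const_mul, integral_const_mul, hQone, integral_const]
          haveI := h𝔪 (k+2)
          simp only [measure_univ, ENNReal.toReal_one, smul_eq_mul, one_mul, mul_one, probReal_univ]
          rw [hfub2, hc'def]
          ring
        rw [hdev]
        have hptw : ∀ z, |(v'' z - c'') * (Q z - ε₀)| ≤ R'' * (Q z - ε₀) := by
          intro z
          rw [abs_mul, abs_of_nonneg (show (0:ℝ) ≤ Q z - ε₀ by linarith [hQl z])]
          exact mul_le_mul_of_nonneg_right (hv''R z) (by linarith [hQl z])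
        have hIdev : Integrable (fun z => (v'' z - c'') * (Q z - ε₀)) (𝔪 (k+2)) := by
          refine hIm (k+2) _ (R'' * (1/ε₀))
            ((hv''m.sub measurable_const).mul (hQm.sub measurable_const)) (fun z => ?_)
          rw [abs_mul]
          refine mul_le_mul (hv''R z) ?_ (abs_nonneg _) hR''0
          rw [abs_of_nonneg (show (0:ℝ) ≤ Q z - ε₀ by linarith [hQl z])]
          have := hQu z
          linarith [hε₀]
        calc |∫ z, (v'' z - c'') * (Q z - ε₀) ∂𝔪 (k+2)|
            ≤ ∫ z, |(v'' z - c'') * (Q z - ε₀)| ∂𝔪 (k+2) := by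
              simpa only [Real.norm_eq_abs] using
                norm_integral_le_integral_norm (μ := 𝔪 (k+2))
                  (fun z => (v'' z - c'') * (Q z - ε₀))
          _ ≤ ∫ z, R'' * (Q z - ε₀) ∂𝔪 (k+2) := by
              refine integral_mono hIdev.abs ((hQInt.sub (integrable_const _)).const_mul _)
                (fun z => hptw z)
          _ = R'' * (1 - ε₀) := by
              rw [integral_const_mul, integral_sub hQInt (integrable_const _), hQone,
                integral_const]
              simp [measure_univ]
          _ ≤ R'' * r := mul_le_mul_of_nonneg_left (le_max_left _ _) hR''0
          _ = R * r ^ ((d+2) / 2) := by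
              rw [hR''def, show (d+2)/2 = d/2 + 1 from by omega, pow_succ]
              ring
      · -- the integral identity
        intro G c hG hGb
        have hGsm2 : StronglyMeasurable[F (k+2)] G := hG.mono (hFle (by omega))
        have hGsm1 : StronglyMeasurable[F (k+1)] G := hG.mono (hFle (by omega))
        calc ∫ ω, G ω * v (X j ω) ∂μ
            = ∫ ω, G ω * v'' (X (k+2) ω) ∂μ := hv''eq G c hGsm2 hGb
          _ = ∫ ω, G ω * w (X (k+1) ω) ∂μ :=
              step1 (k+1) G c hGsm1 hGb v'' B hv''m hv''B
          _ = ∫ ω, G ω * v' (X k ω) ∂μ :=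
              step1 k G c hG hGb w B hwm hwB
  -- centered variables
  set Z : ℕ → Ω → ℝ := fun j ω => Y j ω - ∫ ω', Y j ω' ∂μ with hZdef
  have hYm : ∀ j, Measurable (Y j) := by
    intro j
    have : Y j = fun ω => f j (X j ω) (X (j+1) ω) := funext (hY j)
    rw [this]
    exact (hfmeas j).comp ((hXmeas j).prodMk (hXmeas (j+1)))
  have hYb : ∀ j ω, |Y j ω| ≤ K := fun j ω => by rw [hY j ω]; exact hfK j _ _
  have hZm : ∀ j, Measurable (Z j) := fun j => (hYm j).sub measurable_const
  have hZb : ∀ j ω, |Z j ω| ≤ 2 * K := by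
    intro j ω
    have h1 : |∫ ω', Y j ω' ∂μ| ≤ K := by
      calc |∫ ω', Y j ω' ∂μ| ≤ ∫ ω', |Y j ω'| ∂μ := by
            simpa only [Real.norm_eq_abs] using norm_integral_le_integral_norm (μ := μ) (Y j)
        _ ≤ ∫ _ω', K ∂μ :=
            integral_mono (hIμ _ K (hYm j).aestronglyMeasurable (hYb j)).abs
              (integrable_const K) (fun ω' => hYb j ω')
        _ = K := by simp
    calc |Z j ω| ≤ |Y j ω| + |∫ ω', Y j ω' ∂μ| := abs_sub _ _
      _ ≤ K + K := add_le_add (hYb j ω) h1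
      _ = 2 * K := by ring
  have hZint : ∀ j, Integrable (Z j) μ :=
    fun j => hIμ _ (2*K) (hZm j).aestronglyMeasurable (hZb j)
  have hZzero : ∀ j, ∫ ω, Z j ω ∂μ = 0 := by
    intro j
    simp only [hZdef]
    rw [integral_sub (hIμ _ K (hYm j).aestronglyMeasurable (hYb j)) (integrable_const _)]
    simp
  have hZsm : ∀ j, StronglyMeasurable[F (j+1)] (Z j) := by
    intro j
    have h1 : Measurable[F (j+1)] (fun ω => f j (X j ω) (X (j+1) ω)) :=
      (hfmeas j).comp (Measurable.prodMk (hXmF j (j+1) (by omega)) (hXmF (j+1) (j+1) le_rfl))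
    have h2 : Measurable[F (j+1)] (Y j) := by
      have : Y j = fun ω => f j (X j ω) (X (j+1) ω) := funext (hY j)
      rw [this]; exact h1
    exact (h2.sub measurable_const).stronglyMeasurable
  -- covariance bound
  have hcov : ∀ i j : ℕ, i < j → |∫ ω, Z i ω * Z j ω ∂μ| ≤ 4 * K^2 * s ^ (j - i - 1) := by
    intro i j hij
    haveI := h𝔪 (j+1)
    have hGsm : StronglyMeasurable[F j] (Z i) := (hZsm i).mono (hFle (by omega))
    have e0 : ∫ ω, Z i ω * Z j ω ∂μ = ∫ ω, Z i ω * Y j ω ∂μ := by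
      have h1 : Integrable (fun ω => Z i ω * Y j ω) μ := by
        refine hIμ _ (2*K*K) (((hZm i).mul (hYm j)).aestronglyMeasurable) (fun ω => ?_)
        rw [abs_mul]
        exact mul_le_mul (hZb i ω) (hYb j ω) (abs_nonneg _) (by linarith)
      have h2 : Integrable (fun ω => (∫ ω', Y j ω' ∂μ) * Z i ω) μ := (hZint i).const_mul _
      rw [show (fun ω => Z i ω * Z j ω) =
          fun ω => Z i ω * Y j ω - (∫ ω', Y j ω' ∂μ) * Z i ω from
        funext fun ω => by simp only [hZdef]; ring]
      rw [integral_sub h1 h2, integral_const_mul, hZzero i, mul_zero, sub_zero]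
    rw [e0]
    have e1 : ∫ ω, Z i ω * Y j ω ∂μ =
        ∫ ω, Z i ω * (∫ y, f j (X j ω) y * p j (X j ω) y ∂𝔪 (j+1)) ∂μ := by
      have h2 := step2 j (Z i) (2*K) hGsm (hZb i) (fun q => f j q.1 q.2) K
        (hfmeas j) (fun q => hfK j q.1 q.2)
      calc ∫ ω, Z i ω * Y j ω ∂μ = ∫ ω, Z i ω * f j (X j ω) (X (j+1) ω) ∂μ := by
            refine integral_congr_ae (Eventually.of_forall fun ω => ?_)
            show Z i ω * Y j ω = Z i ω * f j (X j ω) (X (j+1) ω)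
            rw [hY j ω]
        _ = _ := h2
    rw [e1]
    set W : 𝒳 j → ℝ := fun x => ∫ y, f j x y * p j x y ∂𝔪 (j+1) with hWdef
    have hWm : Measurable W := hWmeas j (fun q => f j q.1 q.2) (hfmeas j)
    have hWB : ∀ x, |W x| ≤ K :=
      hWbd j (fun q => f j q.1 q.2) K (hfmeas j) (fun q => hfK j q.1 q.2)
    obtain ⟨v', c', hv'm, hv'B, hv'R, hv'eq⟩ :=
      step3 (j - i - 1) (i+1) j (by omega) W K K 0 hWm hK0 hWB (fun x => by simpa using hWB x)
    rw [hv'eq (Z i) (2*K) (hZsm i) (hZb i)]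
    have hv'i : Integrable (fun ω => Z i ω * v' (X (i+1) ω)) μ := by
      refine hIμ _ (2*K*K)
        (((hZm i).mul (hv'm.comp (hXmeas (i+1)))).aestronglyMeasurable) (fun ω => ?_)
      rw [abs_mul]
      exact mul_le_mul (hZb i ω) (hv'B _) (abs_nonneg _) (by linarith)
    have e2 : ∫ ω, Z i ω * v' (X (i+1) ω) ∂μ =
        ∫ ω, Z i ω * (v' (X (i+1) ω) - c') ∂μ := by
      have h2 : Integrable (fun ω => c' * Z i ω) μ := (hZint i).const_mul _
      rw [show (fun ω => Z i ω * (v' (X (i+1) ω) - c')) =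
          fun ω => Z i ω * v' (X (i+1) ω) - c' * Z i ω from funext fun ω => by ring]
      rw [integral_sub hv'i h2, integral_const_mul, hZzero i, mul_zero, sub_zero]
    rw [e2]
    have hb : ∀ ω, |Z i ω * (v' (X (i+1) ω) - c')| ≤ 2*K * (K * r ^ ((j - i - 1)/2)) := by
      intro ω
      rw [abs_mul]
      refine mul_le_mul (hZb i ω) (hv'R _) (abs_nonneg _) (by linarith)
    have hIb : Integrable (fun ω => Z i ω * (v' (X (i+1) ω) - c')) μ := by
      refine hIμ _ (2*K * (K * r ^ ((j - i - 1)/2)))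
        (((hZm i).mul ((hv'm.comp (hXmeas (i+1))).sub measurable_const)).aestronglyMeasurable)
        hb
    calc |∫ ω, Z i ω * (v' (X (i+1) ω) - c') ∂μ|
        ≤ ∫ ω, |Z i ω * (v' (X (i+1) ω) - c')| ∂μ := by
          simpa only [Real.norm_eq_abs] using
            norm_integral_le_integral_norm (μ := μ)
              (fun ω => Z i ω * (v' (X (i+1) ω) - c'))
      _ ≤ ∫ _ω, 2*K * (K * r ^ ((j - i - 1)/2)) ∂μ :=
          integral_mono hIb.abs (integrable_const _) hb
      _ = 2*K * (K * r ^ ((j - i - 1)/2)) := by simp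
      _ ≤ 4 * K^2 * s ^ (j - i - 1) := by
          have h5 : K^2 * r ^ ((j-i-1)/2) ≤ K^2 * (2 * s ^ (j-i-1)) :=
            mul_le_mul_of_nonneg_left (hpow _) (sq_nonneg K)
          nlinarith [h5]
  -- key almost-monotonicity
  set C : ℝ := 8 * K^2 * ((1-s)⁻¹)^2 with hCdef
  have hC0 : 0 ≤ C := by
    have : (0:ℝ) ≤ (1-s)⁻¹ := inv_nonneg.mpr (by linarith)
    positivity
  have key : ∀ n m : ℕ, n ≤ m → σ n ^ 2 - C ≤ σ m ^ 2 := by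
    intro n m hnm
    have hSZ : ∀ (N : ℕ) (ω : Ω), S N ω = ∑ j ∈ Finset.Ioc 0 N, Z j ω := by
      intro N ω
      rw [hS N ω, ← Finset.Icc_add_one_left_eq_Ioc]; rfl
    have hsplit : ∀ ω, S m ω = S n ω + ∑ j ∈ Finset.Ioc n m, Z j ω := by
      intro ω
      rw [hSZ m ω, hSZ n ω, ← Finset.sum_Ioc_consecutive _ (Nat.zero_le n) hnm]
    set T : Ω → ℝ := fun ω => ∑ j ∈ Finset.Ioc n m, Z j ω with hTdef
    have hTm : Measurable T := Finset.measurable_sum _ (fun j _ => hZm j)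
    have hTb : ∀ ω, |T ω| ≤ (m - n : ℕ) * (2*K) := by
      intro ω
      calc |T ω| ≤ ∑ j ∈ Finset.Ioc n m, |Z j ω| := Finset.abs_sum_le_sum_abs _ _
        _ ≤ ∑ _j ∈ Finset.Ioc n m, 2*K := Finset.sum_le_sum (fun j _ => hZb j ω)
        _ = (m - n : ℕ) * (2*K) := by
            rw [Finset.sum_const, Nat.card_Ioc, nsmul_eq_mul]
    have hSnm : Measurable (S n) := by
      rw [show S n = fun ω => ∑ j ∈ Finset.Ioc 0 n, Z j ω from funext (hSZ n)]
      exact Finset.measurable_sum _ (fun j _ => hZm j)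
    have hSnb : ∀ ω, |S n ω| ≤ (n : ℕ) * (2*K) := by
      intro ω
      rw [hSZ n ω]
      calc |∑ j ∈ Finset.Ioc 0 n, Z j ω| ≤ ∑ j ∈ Finset.Ioc 0 n, |Z j ω| :=
            Finset.abs_sum_le_sum_abs _ _
        _ ≤ ∑ _j ∈ Finset.Ioc 0 n, 2*K := Finset.sum_le_sum (fun j _ => hZb j ω)
        _ = (n : ℕ) * (2*K) := by
            rw [Finset.sum_const, Nat.card_Ioc, nsmul_eq_mul, Nat.sub_zero]
    have hST : Integrable (fun ω => S n ω * T ω) μ := by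
      refine hIμ _ ((n : ℕ) * (2*K) * ((m - n : ℕ) * (2*K)))
        ((hSnm.mul hTm).aestronglyMeasurable) (fun ω => ?_)
      rw [abs_mul]
      refine mul_le_mul (hSnb ω) (hTb ω) (abs_nonneg _) ?_
      positivity
    have hSn2 : Integrable (fun ω => (S n ω)^2) μ := by
      refine hIμ _ (((n : ℕ) * (2*K))^2) ((hSnm.pow_const 2).aestronglyMeasurable)
        (fun ω => ?_)
      rw [abs_of_nonneg (sq_nonneg _), ← sq_abs]
      have h0 : (0:ℝ) ≤ (n : ℕ) * (2*K) := by positivity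
      exact pow_le_pow_left₀ (abs_nonneg _) (hSnb ω) 2
    have hT2 : Integrable (fun ω => (T ω)^2) μ := by
      refine hIμ _ (((m - n : ℕ) * (2*K))^2) ((hTm.pow_const 2).aestronglyMeasurable)
        (fun ω => ?_)
      rw [abs_of_nonneg (sq_nonneg _), ← sq_abs]
      exact pow_le_pow_left₀ (abs_nonneg _) (hTb ω) 2
    have hexp : ∫ ω, (S m ω)^2 ∂μ =
        ∫ ω, (S n ω)^2 ∂μ + ∫ ω, (T ω)^2 ∂μ + 2 * ∫ ω, S n ω * T ω ∂μ := by
      rw [show (fun ω => (S m ω)^2) =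
          fun ω => ((S n ω)^2 + (T ω)^2) + 2*(S n ω * T ω) from
        funext fun ω => by rw [hsplit ω]; ring]
      have h12 : Integrable (fun ω => (S n ω)^2 + (T ω)^2) μ := hSn2.add hT2
      rw [integral_add h12 (hST.const_mul 2), integral_add hSn2 hT2,
        integral_const_mul]
    have hcovsum : ∫ ω, S n ω * T ω ∂μ =
        ∑ i ∈ Finset.Icc 1 n, ∑ j ∈ Finset.Ioc n m, ∫ ω, Z i ω * Z j ω ∂μ := by
      have hZZint : ∀ i j : ℕ, Integrable (fun ω => Z i ω * Z j ω) μ := by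
        intro i j
        refine hIμ _ (2*K*(2*K)) (((hZm i).mul (hZm j)).aestronglyMeasurable) (fun ω => ?_)
        rw [abs_mul]
        exact mul_le_mul (hZb i ω) (hZb j ω) (abs_nonneg _) (by linarith)
      have hSnT : ∀ ω, S n ω * T ω =
          ∑ i ∈ Finset.Icc 1 n, ∑ j ∈ Finset.Ioc n m, Z i ω * Z j ω := by
        intro ω
        have hSn' : S n ω = ∑ i ∈ Finset.Icc 1 n, Z i ω := hS n ω
        rw [hSn', hTdef, Finset.sum_mul_sum]
      rw [show (fun ω => S n ω * T ω) =
          fun ω => ∑ i ∈ Finset.Icc 1 n, ∑ j ∈ Finset.Ioc n m, Z i ω * Z j ω from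
        funext hSnT]
      rw [integral_finset_sum _ (fun i _ => integrable_finset_sum _ (fun j _ => hZZint i j))]
      refine Finset.sum_congr rfl (fun i _ => ?_)
      rw [integral_finset_sum _ (fun j _ => hZZint i j)]
    have hcb : |∫ ω, S n ω * T ω ∂μ| ≤ 4*K^2 * ((1-s)⁻¹)^2 := by
      rw [hcovsum]
      calc |∑ i ∈ Finset.Icc 1 n, ∑ j ∈ Finset.Ioc n m, ∫ ω, Z i ω * Z j ω ∂μ|
          ≤ ∑ i ∈ Finset.Icc 1 n, |∑ j ∈ Finset.Ioc n m, ∫ ω, Z i ω * Z j ω ∂μ| :=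
            Finset.abs_sum_le_sum_abs _ _
        _ ≤ ∑ i ∈ Finset.Icc 1 n, ∑ j ∈ Finset.Ioc n m, |∫ ω, Z i ω * Z j ω ∂μ| :=
            Finset.sum_le_sum (fun i _ => Finset.abs_sum_le_sum_abs _ _)
        _ ≤ ∑ i ∈ Finset.Icc 1 n, ∑ j ∈ Finset.Ioc n m, 4*K^2 * s ^ (j - i - 1) := by
            refine Finset.sum_le_sum (fun i hi => Finset.sum_le_sum (fun j hj => ?_))
            simp only [Finset.mem_Icc] at hi
            simp only [Finset.mem_Ioc] at hj
            exact hcov i j (by omega)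
        _ = 4*K^2 * ∑ i ∈ Finset.Icc 1 n, ∑ j ∈ Finset.Ioc n m, s ^ (j - i - 1) := by
            rw [Finset.mul_sum]
            refine Finset.sum_congr rfl (fun i _ => ?_)
            rw [Finset.mul_sum]
        _ ≤ 4*K^2 * ((1-s)⁻¹)^2 := by
            refine mul_le_mul_of_nonneg_left ?_ (by positivity)
            simpa using aux_double_sum hs0 hs1 n m
    have hT2nn : 0 ≤ ∫ ω, (T ω)^2 ∂μ := integral_nonneg (fun ω => sq_nonneg _)
    have hCeq : C = 2*(4*K^2*((1-s)⁻¹)^2) := by rw [hCdef]; ring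
    rw [hσdef n, hσdef m, hexp]
    have := abs_le.mp hcb
    linarith [this.1, this.2]
  -- conclusion
  refine ⟨fun n => (Finset.range (n+1)).sup' Finset.nonempty_range_add_one (fun k => σ k ^ 2),
    fun n => σ n ^ 2 - (Finset.range (n+1)).sup' Finset.nonempty_range_add_one (fun k => σ k ^ 2),
    ?_, ⟨C, ?_⟩, ?_⟩
  · intro n m hnm
    exact Finset.sup'_mono _ (Finset.range_subset_range.mpr (by omega)) Finset.nonempty_range_add_one
  · intro n
    show |σ n ^ 2 - (Finset.range (n+1)).sup' Finset.nonempty_range_add_one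
        (fun k => σ k ^ 2)| ≤ C
    obtain ⟨k, hk, hak⟩ := Finset.exists_mem_eq_sup' (s := Finset.range (n+1))
      Finset.nonempty_range_add_one (fun k => σ k ^ 2)
    have hkn : k ≤ n := by simpa [Nat.lt_succ_iff] using Finset.mem_range.mp hk
    have h1 : σ n ^ 2 ≤ (Finset.range (n+1)).sup' Finset.nonempty_range_add_one
        (fun k => σ k ^ 2) := by
      have := Finset.le_sup' (f := fun k => σ k ^ 2)
        (b := n) (Finset.self_mem_range_succ n)
      exact this
    have h2 : σ k ^ 2 - C ≤ σ n ^ 2 := key k n hkn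
    have hak' : (Finset.range (n+1)).sup' Finset.nonempty_range_add_one
        (fun k => σ k ^ 2) = σ k ^ 2 := hak
    rw [abs_le]
    constructor <;> linarith [hak', h1, h2]
  · intro n; ring
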